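/- Let a < b < +∞, let s₀ ∈ (a, b), and let h : (a, b) → ℝ be continuously differentiable with h(s) > 0 for all s, satisfying lim_{s → b⁻} h(s) = +∞. Let w : [s₀, b) → ℝ be a continuously differentiable solution of w'(s) = (1 + w(s)²)·(1 − h(s)·w(s)). If there exist M > 0 and s₁ ∈ [s₀, b) such that w(s) ≥ M for every s ∈ [s₁, b), then there exists w₁ ≥ M with lim_{s → b⁻} w(s) = w₁, and lim_{s → b⁻} w'(s) = −∞. -/

import Mathlib

open Set Filter

/-- If `h ∈ C¹(a,b)` is positive, `b < +∞`, `h(s) → +∞` as `s → b⁻`,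
and `w` solves `w' = (1 + w²)(1 − h w)` on `[s₀, b)` with `w ≥ M > 0` near `b`, then
`w` has a finite limit `w₁ ≥ M` at `b⁻` and `w' → −∞` at `b⁻`. -/
theorem bounded_below_solution_limit
    (a b s₀ : ℝ) (hab : a < b) (hs₀ : s₀ ∈ Set.Ioo a b)
    (h : ℝ → ℝ)
    (hC1 : ContDiffOn ℝ 1 h (Set.Ioo a b))
    (hpos : ∀ s ∈ Set.Ioo a b, 0 < h s)
    (hblow : Filter.Tendsto h (nhdsWithin b (Set.Iio b)) Filter.atTop)
    (w : ℝ → ℝ)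
    (hwC1 : ContDiffOn ℝ 1 w (Set.Ico s₀ b))
    (hode : ∀ s ∈ Set.Ico s₀ b,
      HasDerivWithinAt w ((1 + w s ^ 2) * (1 - h s * w s)) (Set.Ico s₀ b) s)
    (M : ℝ) (hM : 0 < M) (s₁ : ℝ) (hs₁ : s₁ ∈ Set.Ico s₀ b)
    (hbound : ∀ s ∈ Set.Ico s₁ b, M ≤ w s) :
    (∃ w₁ : ℝ, M ≤ w₁ ∧ Filter.Tendsto w (nhdsWithin b (Set.Iio b)) (nhds w₁)) ∧
    Filter.Tendsto (fun s => (1 + w s ^ 2) * (1 - h s * w s))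
      (nhdsWithin b (Set.Iio b)) Filter.atBot := by
  obtain ⟨hs₁0, hs₁b⟩ := hs₁
  -- find c < b with h ≥ 2/M on Ioo c b
  have hev : ∀ᶠ s in nhdsWithin b (Set.Iio b), 2 / M ≤ h s :=
    hblow.eventually_ge_atTop _
  obtain ⟨c, hc, hsub⟩ :=
    (mem_nhdsLT_iff_exists_Ioo_subset' hab).1 hev
  have hcb : c < b := hc
  set s₂ : ℝ := max s₁ ((c + b) / 2) with hs₂def
  have hs₂b : s₂ < b := max_lt hs₁b (by linarith)
  have hcs₂ : c < s₂ := lt_of_lt_of_le (by linarith) (le_max_right _ _)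
  have hs₁s₂ : s₁ ≤ s₂ := le_max_left _ _
  have hs₀s₂ : s₀ ≤ s₂ := le_trans hs₁0 hs₁s₂
  -- on [s₂, b) the derivative is negative
  have hderiv_neg : ∀ x ∈ Set.Ioo s₂ b, deriv w x < 0 := by
    intro x hx
    have hxIco : x ∈ Set.Ico s₀ b := ⟨le_of_lt (lt_of_le_of_lt hs₀s₂ hx.1), hx.2⟩
    have hda : HasDerivAt w ((1 + w x ^ 2) * (1 - h x * w x)) x :=
      (hode x hxIco).hasDerivAt (Ico_mem_nhds (lt_of_le_of_lt hs₀s₂ hx.1) hx.2)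
    rw [hda.deriv]
    have hwx : M ≤ w x := hbound x ⟨le_of_lt (lt_of_le_of_lt hs₁s₂ hx.1), hx.2⟩
    have hhx : 2 / M ≤ h x := hsub ⟨hcs₂.trans hx.1, hx.2⟩
    have h2 : 2 ≤ h x * w x := by
      have := mul_le_mul hhx hwx hM.le (le_trans (by positivity) hhx)
      rwa [div_mul_cancel₀ 2 (ne_of_gt hM)] at this
    have h1 : 1 - h x * w x < 0 := by linarith
    have h0 : 0 < 1 + w x ^ 2 := by positivity
    exact mul_neg_of_pos_of_neg h0 h1
  -- w is strictly antitone on [s₂, b)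
  have hanti : StrictAntiOn w (Set.Ico s₂ b) := by
    apply strictAntiOn_of_deriv_neg (convex_Ico s₂ b)
    · exact hwC1.continuousOn.mono (Set.Ico_subset_Ico_left hs₀s₂)
    · intro x hx
      rw [interior_Ico] at hx
      exact hderiv_neg x hx
  have hantiOn : AntitoneOn w (Set.Ioo s₂ b) :=
    (hanti.antitoneOn).mono Set.Ioo_subset_Ico_self
  have hne : (Set.Ioo s₂ b).Nonempty := Set.nonempty_Ioo.2 hs₂b
  have hbdd : BddBelow (w '' Set.Ioo s₂ b) := by
    refine ⟨M, fun y hy => ?_⟩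
    obtain ⟨x, hx, rfl⟩ := hy
    exact hbound x ⟨le_of_lt (lt_of_le_of_lt hs₁s₂ hx.1), hx.2⟩
  have htend : Tendsto w (nhdsWithin b (Set.Iio b)) (nhds (sInf (w '' Set.Ioo s₂ b))) :=
    hantiOn.tendsto_nhdsWithin_Ioo_left hne hbdd
  set w₁ : ℝ := sInf (w '' Set.Ioo s₂ b) with hw₁def
  have hMw₁ : M ≤ w₁ := by
    apply le_csInf (hne.image w)
    rintro y ⟨x, hx, rfl⟩
    exact hbound x ⟨le_of_lt (lt_of_le_of_lt hs₁s₂ hx.1), hx.2⟩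
  refine ⟨⟨w₁, hMw₁, htend⟩, ?_⟩
  -- second part: w' → -∞
  have hw₁pos : 0 < w₁ := hM.trans_le hMw₁
  have t1 : Tendsto (fun s => 1 + w s ^ 2) (nhdsWithin b (Set.Iio b)) (nhds (1 + w₁ ^ 2)) :=
    tendsto_const_nhds.add (htend.pow 2)
  have thw : Tendsto (fun s => h s * w s) (nhdsWithin b (Set.Iio b)) Filter.atTop :=
    hblow.atTop_mul_pos hw₁pos htend
  have t2 : Tendsto (fun s => 1 - h s * w s) (nhdsWithin b (Set.Iio b)) Filter.atBot := by
    have := tendsto_atBot_add_const_left (nhdsWithin b (Set.Iio b)) 1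
      (tendsto_neg_atTop_atBot.comp thw)
    exact this.congr (fun x => by simp [sub_eq_add_neg])
  exact Filter.Tendsto.pos_mul_atBot (by positivity) t1 t2
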